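/- Let N be a real d×d matrix, let 1 ≤ p ≤ d, and let I = (i_1 < … < i_p) and J = (j_1 < … < j_p) be strictly increasing p-tuples in {1,…,d}. Then the map t ↦ det( (exp(tN))_{I,J} ), the p×p minor of exp(tN) with rows I and columns J, is differentiable at t = 0 and its derivative there equals: (a) ∑_{i ∈ I} N_{ii} if I = J; (b) (−1)^q N_{ij} if the sets I and J differ in exactly one element, writing I = K ∪ {i}, J = K ∪ {j} with K = I ∩ J of cardinality p−1 and i ≠ j, where q is the number of indices k ∈ K lying strictly between i and j; (c) 0 if I and J differ in at least two elements. -/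

import Mathlib

open scoped BigOperators

open Finset Matrix

/-- derivative at `t = 0` of the `p×p` minor `det((exp tN)_{I,J})` of the matrix
exponential, for strictly increasing row and column tuples `I, J`:
(a) `∑_{i∈I} N_{ii}` if `I = J`; (b) `(−1)^q N_{ij}` if the sets `I` and `J` differ in exactly
one element, with `I = K ∪ {i}`, `J = K ∪ {j}`, `K = I ∩ J`, `q` the number of `k ∈ K` strictly
between `i` and `j`; (c) `0` if they differ in at least two elements. -/

lemma entryDeriv {d : ℕ} (N : Matrix (Fin d) (Fin d) ℝ) (i j : Fin d) :
    HasDerivAt (fun t : ℝ => NormedSpace.exp (t • N) i j) (N i j) 0 := by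
  letI : SeminormedRing (Matrix (Fin d) (Fin d) ℝ) := Matrix.linftyOpSemiNormedRing
  letI : NormedRing (Matrix (Fin d) (Fin d) ℝ) := Matrix.linftyOpNormedRing
  letI : NormedAlgebra ℝ (Matrix (Fin d) (Fin d) ℝ) := Matrix.linftyOpNormedAlgebra
  have h := hasDerivAt_exp_smul_const (𝕂 := ℝ) N (0 : ℝ)
  rw [zero_smul, NormedSpace.exp_zero, one_mul] at h
  let L0 : Matrix (Fin d) (Fin d) ℝ →ₗ[ℝ] ℝ :=
    (LinearMap.proj j).comp (LinearMap.proj (R := ℝ) (φ := fun _ : Fin d => Fin d → ℝ) i)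
  let L : Matrix (Fin d) (Fin d) ℝ →L[ℝ] ℝ := LinearMap.toContinuousLinearMap L0
  have h2 := (L.hasFDerivAt).comp_hasDerivAt 0 h
  exact h2

lemma det_updateColumn_one {p : ℕ} (b : Fin p) (v : Fin p → ℝ) :
    ((1 : Matrix (Fin p) (Fin p) ℝ).updateCol b v).det = v b := by
  rw [← Matrix.cramer_apply, Matrix.cramer_one]
  rfl

lemma card_filter_lt {p d : ℕ} {f : Fin p → Fin d} (hf : StrictMono f) (a : Fin p) :
    ((Finset.image f Finset.univ).filter (fun y => y < f a)).card = a := by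
  rw [Finset.filter_image, Finset.card_image_of_injective _ hf.injective]
  have : (Finset.univ.filter fun x => f x < f a) = Finset.Iio a := by
    ext x; simp [hf.lt_iff_lt]
  rw [this, Fin.card_Iio]

lemma hasDerivAt_det {p : ℕ} (M : ℝ → Matrix (Fin p) (Fin p) ℝ) (A B : Matrix (Fin p) (Fin p) ℝ)
    (hA : M 0 = A)
    (hM : ∀ a b, HasDerivAt (fun t => M t a b) (B a b) 0) :
    HasDerivAt (fun t => (M t).det)
      (∑ b : Fin p, (A.updateCol b (fun a => B a b)).det) 0 := by
  have h1 : HasDerivAt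
      (fun t => ∑ σ : Equiv.Perm (Fin p), ((Equiv.Perm.sign σ : ℤ) : ℝ) * ∏ a, M t (σ a) a)
      (∑ σ : Equiv.Perm (Fin p), ((Equiv.Perm.sign σ : ℤ) : ℝ) *
        ∑ b : Fin p, (∏ a ∈ Finset.univ.erase b, A (σ a) a) * B (σ b) b) 0 := by
    apply HasDerivAt.fun_sum
    intro σ _
    refine HasDerivAt.const_mul _ ?_
    have := HasDerivAt.fun_finset_prod (𝕜 := ℝ) (u := (Finset.univ : Finset (Fin p)))
      (f := fun a t => M t (σ a) a) (f' := fun a => B (σ a) a) (x := 0)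
      (fun a _ => hM (σ a) a)
    simpa [hA, smul_eq_mul] using this
  have e1 : (fun t => (M t).det) =
      (fun t => ∑ σ : Equiv.Perm (Fin p), ((Equiv.Perm.sign σ : ℤ) : ℝ) * ∏ a, M t (σ a) a) := by
    funext t; rw [Matrix.det_apply']
  have e2 : (∑ b : Fin p, (A.updateCol b (fun a => B a b)).det) =
      ∑ σ : Equiv.Perm (Fin p), ((Equiv.Perm.sign σ : ℤ) : ℝ) *
        ∑ b : Fin p, (∏ a ∈ Finset.univ.erase b, A (σ a) a) * B (σ b) b := by
    simp_rw [Matrix.det_apply']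
    rw [Finset.sum_comm]
    refine Finset.sum_congr rfl fun σ _ => ?_
    rw [Finset.mul_sum]
    refine Finset.sum_congr rfl fun b _ => ?_
    have hprod : ∏ a, (A.updateCol b (fun a' => B a' b)) (σ a) a
        = B (σ b) b * ∏ a ∈ Finset.univ.erase b, A (σ a) a := by
      rw [← Finset.mul_prod_erase Finset.univ _ (Finset.mem_univ b)]
      congr 1
      · simp [Matrix.updateCol_apply]
      · refine Finset.prod_congr rfl fun a ha => ?_
        rw [Matrix.updateCol_apply, if_neg (Finset.ne_of_mem_erase ha)]
    rw [hprod]; ring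
  rw [e1, e2]
  exact h1

lemma keyPerm {p' d : ℕ} {I J : Fin (p' + 1) → Fin d} (hI : StrictMono I) (hJ : StrictMono J)
    {i j : Fin d}
    (hIJ : (Finset.image I Finset.univ) \ (Finset.image J Finset.univ) = {i})
    (hJI : (Finset.image J Finset.univ) \ (Finset.image I Finset.univ) = {j})
    {a0 b0 : Fin (p' + 1)} (ha0 : I a0 = i) (hb0 : J b0 = j)
    (b : Fin (p' + 1)) (hb : b ≠ b0) :
    I ((Fin.cycleRange a0)⁻¹ (Fin.cycleRange b0 b)) = J b := by
  set imgI := Finset.image I Finset.univ with himgI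
  set imgJ := Finset.image J Finset.univ with himgJ
  have hiJ : i ∉ imgJ := by
    have : i ∈ imgI \ imgJ := hIJ ▸ Finset.mem_singleton_self i
    exact (Finset.mem_sdiff.mp this).2
  have hjI : j ∉ imgI := by
    have : j ∈ imgJ \ imgI := hJI ▸ Finset.mem_singleton_self j
    exact (Finset.mem_sdiff.mp this).2
  set K := imgI ∩ imgJ with hK
  have hiK : i ∉ K := fun h => hiJ (Finset.mem_of_mem_inter_right h)
  have hjK : j ∉ K := fun h => hjI (Finset.mem_of_mem_inter_left h)
  have hKI : imgI = insert i K := by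
    rw [← Finset.sdiff_union_inter imgI imgJ, hIJ, ← Finset.insert_eq]
  have hKJ : imgJ = insert j K := by
    rw [← Finset.sdiff_union_inter imgJ imgI, hJI, Finset.inter_comm, ← Finset.insert_eq]
  have hyJ : J b ∈ imgJ := Finset.mem_image_of_mem J (Finset.mem_univ b)
  have hyj : J b ≠ j := fun h => hb (hJ.injective (h.trans hb0.symm))
  have hyi : J b ≠ i := fun h => hiJ (h ▸ hyJ)
  have hyI : J b ∈ imgI := by
    by_contra h
    have : J b ∈ imgJ \ imgI := Finset.mem_sdiff.mpr ⟨hyJ, h⟩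
    rw [hJI, Finset.mem_singleton] at this
    exact hyj this
  obtain ⟨c, -, hc⟩ := Finset.mem_image.mp hyI
  -- counting
  have h1 : (imgI.filter (fun z => z < J b)).card = (c : ℕ) := by
    rw [← hc]; exact card_filter_lt hI c
  have h2 : (imgJ.filter (fun z => z < J b)).card = (b : ℕ) := card_filter_lt hJ b
  have hcc : (c : ℕ) = (K.filter (fun z => z < J b)).card + (if i < J b then 1 else 0) := by
    rw [← h1, hKI, Finset.filter_insert]
    split
    · rw [Finset.card_insert_of_notMem (fun h => hiK (Finset.mem_of_mem_filter i h))]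
    · rfl
  have hbb : (b : ℕ) = (K.filter (fun z => z < J b)).card + (if j < J b then 1 else 0) := by
    rw [← h2, hKJ, Finset.filter_insert]
    split
    · rw [Finset.card_insert_of_notMem (fun h => hjK (Finset.mem_of_mem_filter j h))]
    · rfl
  have hca : c < a0 ↔ J b < i := by rw [← ha0, ← hc, hI.lt_iff_lt]
  have hac : a0 < c ↔ i < J b := by rw [← ha0, ← hc, hI.lt_iff_lt]
  have hbB : b < b0 ↔ J b < j := by rw [← hb0, hJ.lt_iff_lt]
  have hBb : b0 < b ↔ j < J b := by rw [← hb0, hJ.lt_iff_lt]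
  suffices hgoal : (Fin.cycleRange a0)⁻¹ (Fin.cycleRange b0 b) = c by rw [hgoal, hc]
  rw [Equiv.Perm.inv_def, Equiv.symm_apply_eq]
  rcases lt_or_gt_of_ne hyi with hi' | hi' <;> rcases lt_or_gt_of_ne hyj with hj' | hj'
  · -- J b < i, J b < j
    rw [Fin.cycleRange_of_lt (hbB.mpr hj'), Fin.cycleRange_of_lt (hca.mpr hi')]
    have : (b : ℕ) = (c : ℕ) := by rw [hbb, hcc, if_neg (asymm hi'), if_neg (asymm hj')]
    rw [Fin.ext this]
  · -- J b < i, j < J b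
    rw [Fin.cycleRange_of_gt (hBb.mpr hj'), Fin.cycleRange_of_lt (hca.mpr hi')]
    refine (Fin.ext ?_).symm
    rw [Fin.val_add_one_of_lt (lt_of_lt_of_le (hca.mpr hi') (Fin.le_last a0))]
    rw [hbb, hcc, if_neg (asymm hi'), if_pos hj']
  · -- i < J b, J b < j
    rw [Fin.cycleRange_of_lt (hbB.mpr hj'), Fin.cycleRange_of_gt (hac.mpr hi')]
    refine Fin.ext ?_
    rw [Fin.val_add_one_of_lt (lt_of_lt_of_le (hbB.mpr hj') (Fin.le_last b0))]
    rw [hbb, hcc, if_pos hi', if_neg (asymm hj')]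
  · -- i < J b, j < J b
    rw [Fin.cycleRange_of_gt (hBb.mpr hj'), Fin.cycleRange_of_gt (hac.mpr hi')]
    refine Fin.ext ?_
    rw [hbb, hcc, if_pos hi', if_pos hj']

lemma parity_aux {d : ℕ} {K : Finset (Fin d)} {i j : Fin d} (hij : i < j) (hiK : i ∉ K) :
    (K.filter (fun k => i < k ∧ k < j)).card + (K.filter (fun k => k < i)).card
      = (K.filter (fun k => k < j)).card := by
  rw [← Finset.card_union_of_disjoint (by
    rw [Finset.disjoint_left]
    intro k hk1 hk2
    exact absurd (Finset.mem_filter.mp hk2).2 (asymm (Finset.mem_filter.mp hk1).2.1))]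
  congr 1
  ext k
  simp only [Finset.mem_union, Finset.mem_filter]
  constructor
  · rintro (⟨hk, h1, h2⟩ | ⟨hk, h1⟩)
    exacts [⟨hk, h2⟩, ⟨hk, h1.trans hij⟩]
  · rintro ⟨hk, hkj⟩
    rcases lt_trichotomy k i with h | h | h
    · exact Or.inr ⟨hk, h⟩
    · exact absurd (h ▸ hk) hiK
    · exact Or.inl ⟨hk, h, hkj⟩

lemma detColumn {p' d : ℕ} {I J : Fin (p' + 1) → Fin d} (hI : StrictMono I) (hJ : StrictMono J)
    {i j : Fin d}
    (hIJ : (Finset.image I Finset.univ) \ (Finset.image J Finset.univ) = {i})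
    (hJI : (Finset.image J Finset.univ) \ (Finset.image I Finset.univ) = {j})
    {a0 b0 : Fin (p' + 1)} (ha0 : I a0 = i) (hb0 : J b0 = j) (v : Fin (p' + 1) → ℝ) :
    (((1 : Matrix (Fin d) (Fin d) ℝ).submatrix I J).updateCol b0 v).det
      = (-1 : ℝ) ^ ((a0 : ℕ) + (b0 : ℕ)) * v a0 := by
  set g : Equiv.Perm (Fin (p' + 1)) := (Fin.cycleRange a0)⁻¹ * Fin.cycleRange b0 with hg
  have hgb0 : g b0 = a0 := by
    show (Fin.cycleRange a0)⁻¹ (Fin.cycleRange b0 b0) = a0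
    rw [Fin.cycleRange_self, Equiv.Perm.inv_def, Equiv.symm_apply_eq, Fin.cycleRange_self]
  have hmat : ((1 : Matrix (Fin d) (Fin d) ℝ).submatrix I J).updateCol b0 v
      = ((1 : Matrix (Fin (p' + 1)) (Fin (p' + 1)) ℝ).updateCol a0 v).submatrix id g := by
    ext a b
    rw [Matrix.submatrix_apply, id_eq]
    by_cases hbb : b = b0
    · subst hbb
      rw [Matrix.updateCol_apply, if_pos rfl, Matrix.updateCol_apply, if_pos hgb0]
    · rw [Matrix.updateCol_apply, if_neg hbb, Matrix.updateCol_apply,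
        if_neg (fun h => hbb (g.injective (h.trans hgb0.symm)))]
      rw [Matrix.submatrix_apply, Matrix.one_apply, Matrix.one_apply]
      have hkey : I (g b) = J b := keyPerm hI hJ hIJ hJI ha0 hb0 b hbb
      have : (I a = J b) ↔ (a = g b) := by rw [← hkey, hI.injective.eq_iff]
      simp only [this]
  rw [hmat, Matrix.det_permute', det_updateColumn_one]
  congr 1
  rw [hg, _root_.map_mul, Equiv.Perm.sign_inv, Fin.sign_cycleRange, Fin.sign_cycleRange]
  push_cast
  rw [pow_add]

theorem stmt5 (d p : ℕ) (hp : 1 ≤ p) (hpd : p ≤ d)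
    (N : Matrix (Fin d) (Fin d) ℝ)
    (I J : Fin p → Fin d) (hI : StrictMono I) (hJ : StrictMono J) :
    -- (a)
    (I = J →
      HasDerivAt (fun t : ℝ => ((NormedSpace.exp (t • N)).submatrix I J).det)
        (∑ a : Fin p, N (I a) (I a)) 0) ∧
    -- (b)
    (∀ i j : Fin d, i ≠ j →
      (Finset.image I Finset.univ) \ (Finset.image J Finset.univ) = {i} →
      (Finset.image J Finset.univ) \ (Finset.image I Finset.univ) = {j} →
      HasDerivAt (fun t : ℝ => ((NormedSpace.exp (t • N)).submatrix I J).det)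
        ((-1 : ℝ) ^
            (((Finset.image I Finset.univ) ∩ (Finset.image J Finset.univ)).filter
              (fun k => min i j < k ∧ k < max i j)).card
          * N i j) 0) ∧
    -- (c)
    (2 ≤ ((Finset.image I Finset.univ) \ (Finset.image J Finset.univ)).card →
      HasDerivAt (fun t : ℝ => ((NormedSpace.exp (t • N)).submatrix I J).det) 0 0) := by
  obtain ⟨p', rfl⟩ : ∃ p', p = p' + 1 := ⟨p - 1, by omega⟩
  set A : Matrix (Fin (p' + 1)) (Fin (p' + 1)) ℝ := (1 : Matrix (Fin d) (Fin d) ℝ).submatrix I J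
    with hA
  have key : HasDerivAt (fun t : ℝ => ((NormedSpace.exp (t • N)).submatrix I J).det)
      (∑ b : Fin (p' + 1), (A.updateCol b (fun a => (N.submatrix I J) a b)).det) 0 := by
    apply hasDerivAt_det (fun t => ((NormedSpace.exp (t • N)).submatrix I J)) A (N.submatrix I J)
    · rw [zero_smul, NormedSpace.exp_zero]
    · intro a b
      exact entryDeriv N (I a) (J b)
  refine ⟨?_, ?_, ?_⟩
  · -- case (a)
    intro hIJ
    subst hIJ
    have hA1 : A = 1 := by
      ext a b
      simp [hA, Matrix.submatrix_apply, Matrix.one_apply, hI.injective.eq_iff]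
    have hsum : (∑ b : Fin (p' + 1), (A.updateCol b (fun a => (N.submatrix I I) a b)).det)
        = ∑ a : Fin (p' + 1), N (I a) (I a) := by
      rw [hA1]
      refine Finset.sum_congr rfl fun b _ => ?_
      rw [det_updateColumn_one]
      rfl
    rw [← hsum]
    exact key
  · -- case (b)
    intro i j hij hIJ hJI
    have hiI : i ∈ Finset.image I Finset.univ :=
      (Finset.mem_sdiff.mp (hIJ ▸ Finset.mem_singleton_self i)).1
    have hiJ : i ∉ Finset.image J Finset.univ :=
      (Finset.mem_sdiff.mp (hIJ ▸ Finset.mem_singleton_self i)).2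
    have hjJ : j ∈ Finset.image J Finset.univ :=
      (Finset.mem_sdiff.mp (hJI ▸ Finset.mem_singleton_self j)).1
    have hjI : j ∉ Finset.image I Finset.univ :=
      (Finset.mem_sdiff.mp (hJI ▸ Finset.mem_singleton_self j)).2
    obtain ⟨a0, -, ha0⟩ := Finset.mem_image.mp hiI
    obtain ⟨b0, -, hb0⟩ := Finset.mem_image.mp hjJ
    have hsum : (∑ b : Fin (p' + 1), (A.updateCol b (fun a => (N.submatrix I J) a b)).det)
        = (A.updateCol b0 (fun a => (N.submatrix I J) a b0)).det := by
      refine Finset.sum_eq_single_of_mem b0 (Finset.mem_univ b0) fun b _ hbne => ?_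
      refine Matrix.det_eq_zero_of_column_eq_zero b0 fun a => ?_
      rw [Matrix.updateCol_apply, if_neg (Ne.symm hbne), hA, Matrix.submatrix_apply,
        Matrix.one_apply, if_neg]
      intro h
      exact hjI (hb0 ▸ h ▸ Finset.mem_image_of_mem I (Finset.mem_univ a))
    have hdet := detColumn hI hJ hIJ hJI ha0 hb0 (fun a => (N.submatrix I J) a b0)
    -- positions as counts
    have ha0n : (a0 : ℕ)
        = (((Finset.image I Finset.univ) ∩ (Finset.image J Finset.univ)).filter
            (fun k => k < i)).card := by
      have h1 := card_filter_lt hI a0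
      rw [ha0] at h1
      rw [← h1]
      congr 1
      ext k
      simp only [Finset.mem_filter, Finset.mem_inter]
      constructor
      · rintro ⟨hk, hki⟩
        refine ⟨⟨hk, ?_⟩, hki⟩
        by_contra hkJ
        have hmem : k ∈ Finset.image I Finset.univ \ Finset.image J Finset.univ :=
          Finset.mem_sdiff.mpr ⟨hk, hkJ⟩
        rw [hIJ, Finset.mem_singleton] at hmem
        exact absurd hki (hmem ▸ lt_irrefl i)
      · rintro ⟨⟨hk, -⟩, hki⟩
        exact ⟨hk, hki⟩
    have hb0n : (b0 : ℕ)
        = (((Finset.image I Finset.univ) ∩ (Finset.image J Finset.univ)).filter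
            (fun k => k < j)).card := by
      have h1 := card_filter_lt hJ b0
      rw [hb0] at h1
      rw [← h1]
      congr 1
      ext k
      simp only [Finset.mem_filter, Finset.mem_inter]
      constructor
      · rintro ⟨hk, hki⟩
        refine ⟨⟨?_, hk⟩, hki⟩
        by_contra hkI
        have hmem : k ∈ Finset.image J Finset.univ \ Finset.image I Finset.univ :=
          Finset.mem_sdiff.mpr ⟨hk, hkI⟩
        rw [hJI, Finset.mem_singleton] at hmem
        exact absurd hki (hmem ▸ lt_irrefl j)
      · rintro ⟨⟨-, hk⟩, hki⟩
        exact ⟨hk, hki⟩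
    have hiK : i ∉ (Finset.image I Finset.univ) ∩ (Finset.image J Finset.univ) :=
      fun h => hiJ (Finset.mem_of_mem_inter_right h)
    have hjK : j ∉ (Finset.image I Finset.univ) ∩ (Finset.image J Finset.univ) :=
      fun h => hjI (Finset.mem_of_mem_inter_left h)
    have hpar : (-1 : ℝ) ^ ((a0 : ℕ) + (b0 : ℕ))
        = (-1 : ℝ) ^
            (((Finset.image I Finset.univ) ∩ (Finset.image J Finset.univ)).filter
              (fun k => min i j < k ∧ k < max i j)).card := by
      rcases lt_or_gt_of_ne hij with h | h
      · rw [min_eq_left h.le, max_eq_right h.le]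
        have := parity_aux h hiK
        rw [show (a0 : ℕ) + (b0 : ℕ)
            = (((Finset.image I Finset.univ) ∩ (Finset.image J Finset.univ)).filter
                (fun k => i < k ∧ k < j)).card + 2 * (a0 : ℕ) by omega,
          pow_add, pow_mul, neg_one_sq, one_pow, mul_one]
      · rw [min_eq_right h.le, max_eq_left h.le]
        have := parity_aux h hjK
        rw [show (a0 : ℕ) + (b0 : ℕ)
            = (((Finset.image I Finset.univ) ∩ (Finset.image J Finset.univ)).filter
                (fun k => j < k ∧ k < i)).card + 2 * (b0 : ℕ) by omega,
          pow_add, pow_mul, neg_one_sq, one_pow, mul_one]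
    have hv : (N.submatrix I J) a0 b0 = N i j := by
      rw [Matrix.submatrix_apply, ha0, hb0]
    rw [hsum, hA, hdet, hv, hpar] at key
    exact key
  · -- case (c)
    intro h2
    have hcard : 2 ≤ ((Finset.image J Finset.univ) \ (Finset.image I Finset.univ)).card := by
      rwa [Finset.card_sdiff_comm (by
        rw [Finset.card_image_of_injective _ hI.injective,
          Finset.card_image_of_injective _ hJ.injective])] at h2
    obtain ⟨j1, hj1, j2, hj2, hj12⟩ := Finset.one_lt_card.mp (lt_of_lt_of_le one_lt_two hcard)
    obtain ⟨b1, -, hb1⟩ := Finset.mem_image.mp (Finset.mem_sdiff.mp hj1).1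
    obtain ⟨b2, -, hb2⟩ := Finset.mem_image.mp (Finset.mem_sdiff.mp hj2).1
    have hj1I : j1 ∉ Finset.image I Finset.univ := (Finset.mem_sdiff.mp hj1).2
    have hj2I : j2 ∉ Finset.image I Finset.univ := (Finset.mem_sdiff.mp hj2).2
    have hb12 : b1 ≠ b2 := fun h => hj12 (hb1 ▸ hb2 ▸ h ▸ rfl)
    have hzero : ∀ b : Fin (p' + 1),
        (A.updateCol b (fun a => (N.submatrix I J) a b)).det = 0 := by
      intro b
      have hcol : ∀ (c : Fin (p' + 1)), c ≠ b → J c ∉ Finset.image I Finset.univ →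
          (A.updateCol b (fun a => (N.submatrix I J) a b)).det = 0 := by
        intro c hcb hcI
        refine Matrix.det_eq_zero_of_column_eq_zero c fun a => ?_
        rw [Matrix.updateCol_apply, if_neg hcb, hA, Matrix.submatrix_apply,
          Matrix.one_apply, if_neg]
        intro h
        exact hcI (h ▸ Finset.mem_image_of_mem I (Finset.mem_univ a))
      by_cases hbb : b1 = b
      · exact hcol b2 (fun h => hb12 (by rw [hbb, ← h])) (hb2 ▸ hj2I)
      · exact hcol b1 hbb (hb1 ▸ hj1I)
    have hsum : (∑ b : Fin (p' + 1), (A.updateCol b (fun a => (N.submatrix I J) a b)).det)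
        = 0 := Finset.sum_eq_zero fun b _ => hzero b
    rw [hsum] at key
    exact key
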